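/- Let R = ℤ[H × ⟨g⟩] where H is the group of all p-power roots of unity in an algebraically closed field of characteristic 0 and g = 1/p, and let q ≠ p be a prime. Then the chain of ideals {Rq^n : n ≥ 0} is an infinite strictly descending chain in which each quotient Rq^n / Rq^{n+1} is infinite. -/
import Mathlib

section Aux

variable {F : Type} [Field F]

/-- Roots of unity are integral over `ℤ`. -/
lemma aux_int_of_root {x : F} {N : ℕ} (hN : 0 < N) (hx : x ^ N = 1) : IsIntegral ℤ x :=
  IsIntegral.of_pow hN (hx ▸ isIntegral_one)

/-- If `η ≠ 1` is an `N`-th root of unity, then `1 - η` divides `N` in the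
integral closure of `ℤ`. -/
lemma aux_sub_one_dvd {η : F} {N : ℕ} (hN : 0 < N) (hη : η ^ N = 1) (hone : η ≠ 1) :
    ∃ w : F, IsIntegral ℤ w ∧ (1 - η) * w = (N : F) := by
  refine ⟨∑ i ∈ Finset.range N, ∑ j ∈ Finset.range i, η ^ j, ?_, ?_⟩
  · exact IsIntegral.sum _ fun i _ => IsIntegral.sum _ fun j _ =>
      (aux_int_of_root hN hη).pow j
  · have h2 : ∑ i ∈ Finset.range N, η ^ i = 0 := by
      have h3 := geom_sum_mul η N
      rw [hη, sub_self] at h3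
      rcases mul_eq_zero.mp h3 with h | h
      · exact h
      · exact absurd (sub_eq_zero.mp h) hone
    rw [Finset.mul_sum]
    calc ∑ i ∈ Finset.range N, (1 - η) * ∑ j ∈ Finset.range i, η ^ j
        = ∑ i ∈ Finset.range N, (1 - η ^ i) :=
          Finset.sum_congr rfl fun i _ => by linear_combination -(geom_sum_mul η i)
      _ = (N : F) := by
          rw [Finset.sum_sub_distrib, h2, sub_zero, Finset.sum_const, Finset.card_range,
            nsmul_eq_mul, mul_one]

/-- A rational number that is integral over `ℤ` is an integer; consequently `q` cannot
divide a power of `p` this way. -/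
lemma aux_q_not_dvd [CharZero F] {p q m : ℕ} (hp : p.Prime) (hq : q.Prime) (hne : q ≠ p)
    {x : F} (hx : IsIntegral ℤ x) (h : (q : F) * x = (p : F) ^ m) : False := by
  have hq0 : (q : F) ≠ 0 := Nat.cast_ne_zero.mpr hq.pos.ne'
  have hq0' : (q : ℚ) ≠ 0 := Nat.cast_ne_zero.mpr hq.pos.ne'
  have hmap : algebraMap ℚ F ((p : ℚ) ^ m / (q : ℚ)) = x := by
    rw [map_div₀, map_pow, map_natCast, map_natCast, eq_comm, eq_div_iff hq0, ← h]
    ring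
  have h2 : IsIntegral ℤ ((p : ℚ) ^ m / (q : ℚ)) := by
    rw [← isIntegral_algebraMap_iff (algebraMap ℚ F).injective, hmap]; exact hx
  obtain ⟨y, hy⟩ := IsIntegrallyClosed.isIntegral_iff.mp h2
  have hy' : (q : ℤ) * y = (p : ℤ) ^ m := by
    have : (q : ℚ) * (y : ℚ) = (p : ℚ) ^ m := by
      rw [show ((y : ℤ) : ℚ) = algebraMap ℤ ℚ y from rfl, hy]
      field_simp
    exact_mod_cast this
  have hdvd : q ∣ p ^ m := by
    have : (q : ℤ) ∣ (p : ℤ) ^ m := Dvd.intro y hy'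
    exact_mod_cast this
  exact hne ((Nat.prime_dvd_prime_iff_eq hq hp).mp (hq.dvd_of_dvd_pow hdvd))

/-- Every element of `R` becomes integral after multiplying by a power of `p`. -/
lemma aux_mem_R [CharZero F] {p : ℕ} (hp : p.Prime) {x : F}
    (hx : x ∈ Subring.closure ({x : F | ∃ n : ℕ, x ^ p ^ n = 1} ∪ {(p : F)⁻¹})) :
    ∃ m : ℕ, IsIntegral ℤ ((p : F) ^ m * x) := by
  have hpow : ∀ k : ℕ, IsIntegral ℤ ((p : F) ^ k) := by
    intro k
    have := isIntegral_algebraMap (R := ℤ) (A := F) (x := (p : ℤ) ^ k)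
    simpa using this
  induction hx using Subring.closure_induction with
  | mem x hx =>
    rcases hx with h | h
    · obtain ⟨n, hn⟩ := h
      exact ⟨0, by simpa using aux_int_of_root (pow_pos hp.pos n) hn⟩
    · refine ⟨1, ?_⟩
      rw [Set.mem_singleton_iff] at h
      subst h
      rw [pow_one, mul_inv_cancel₀ (Nat.cast_ne_zero.mpr hp.pos.ne')]
      exact isIntegral_one
  | zero => exact ⟨0, by simpa using isIntegral_zero⟩
  | one => exact ⟨0, by simpa using isIntegral_one⟩
  | add x y hx hy ihx ihy =>
    obtain ⟨m, hm⟩ := ihx; obtain ⟨k, hk⟩ := ihy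
    refine ⟨m + k, ?_⟩
    have heq : (p : F) ^ (m + k) * (x + y)
        = (p : F) ^ k * ((p : F) ^ m * x) + (p : F) ^ m * ((p : F) ^ k * y) := by
      rw [pow_add]; ring
    rw [heq]
    exact (((hpow k).mul hm).add ((hpow m).mul hk))
  | neg x hx ihx =>
    obtain ⟨m, hm⟩ := ihx
    exact ⟨m, by rw [mul_neg]; exact hm.neg⟩
  | mul x y hx hy ihx ihy =>
    obtain ⟨m, hm⟩ := ihx; obtain ⟨k, hk⟩ := ihy
    refine ⟨m + k, ?_⟩
    have heq : (p : F) ^ (m + k) * (x * y) = ((p : F) ^ m * x) * ((p : F) ^ k * y) := by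
      rw [pow_add]; ring
    rw [heq]
    exact hm.mul hk

/-- `q` is not invertible in `R`. -/
lemma aux_not_unit [CharZero F] {p q : ℕ} (hp : p.Prime) (hq : q.Prime) (hne : q ≠ p)
    {r : F} (hr : r ∈ Subring.closure ({x : F | ∃ n : ℕ, x ^ p ^ n = 1} ∪ {(p : F)⁻¹}))
    (h : (q : F) * r = 1) : False := by
  obtain ⟨m, hm⟩ := aux_mem_R hp hr
  exact aux_q_not_dvd hp hq hne hm (by linear_combination (p : F) ^ m * h)

/-- `q` does not divide a difference of two distinct `p`-power roots of unity in `R`. -/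
lemma aux_sep [CharZero F] {p q : ℕ} (hp : p.Prime) (hq : q.Prime) (hne : q ≠ p)
    {x y r : F} (hx : ∃ n : ℕ, x ^ p ^ n = 1) (hy : ∃ n : ℕ, y ^ p ^ n = 1) (hxy : x ≠ y)
    (hr : r ∈ Subring.closure ({x : F | ∃ n : ℕ, x ^ p ^ n = 1} ∪ {(p : F)⁻¹}))
    (h : (q : F) * r = x - y) : False := by
  obtain ⟨nx, hnx⟩ := hx
  obtain ⟨ny, hny⟩ := hy
  set N := p ^ (nx + ny) with hN
  have hNpos : 0 < N := pow_pos hp.pos _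
  have hxN : x ^ N = 1 := by
    rw [hN, pow_add, pow_mul, hnx, one_pow]
  have hyN : y ^ N = 1 := by
    rw [hN, pow_add, Nat.mul_comm, pow_mul, hny, one_pow]
  set v := y ^ (N - 1) with hv
  have hy1 : y * v = 1 := by
    rw [hv, ← pow_succ', Nat.sub_add_cancel hNpos, hyN]
  have hvint : IsIntegral ℤ v := (aux_int_of_root hNpos hyN).pow _
  have hηN : (x * v) ^ N = 1 := by
    rw [mul_pow, hxN, one_mul, hv, ← pow_mul, Nat.mul_comm, pow_mul, hyN, one_pow]
  have hη1 : x * v ≠ 1 := by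
    intro hcon
    apply hxy
    calc x = x * (y * v) := by rw [hy1, mul_one]
      _ = (x * v) * y := by ring
      _ = y := by rw [hcon, one_mul]
  obtain ⟨w, hwint, hw⟩ := aux_sub_one_dvd hNpos hηN hη1
  have hNF : ((N : ℕ) : F) = (p : F) ^ (nx + ny) := by push_cast [hN]; ring
  rw [hNF] at hw
  have h2 : (y - x) * w = y * (p : F) ^ (nx + ny) := by
    linear_combination y * hw + x * w * hy1
  obtain ⟨m, hm⟩ := aux_mem_R hp hr
  have hzint : IsIntegral ℤ (-((p : F) ^ m * r) * w * v) := (hm.neg.mul hwint).mul hvint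
  refine aux_q_not_dvd hp hq hne hzint (m := m + (nx + ny)) ?_
  rw [pow_add]
  linear_combination (-(p : F) ^ m * w * v) * h + ((p : F) ^ m * v) * h2 +
    ((p : F) ^ m * (p : F) ^ (nx + ny)) * hy1

end Aux

/-- Let `R = ℤ[H × ⟨g⟩]` be the subring of an algebraically closed field `F` of
characteristic `0` generated by the `p`-power roots of unity and `g = 1/p`, and
let `q ≠ p` be a prime. Then the ideals `Rq^n` form an infinite strictly
descending chain in which each factor `Rq^n / Rq^(n+1)` is infinite. -/
theorem strictly_descending_chain_of_ideals (F : Type) [Field F] [IsAlgClosed F]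
    [CharZero F] (p q : ℕ) (hp : p.Prime) (hq : q.Prime) (hne : q ≠ p) :
    let R := Subring.closure ({x : F | ∃ n : ℕ, x ^ p ^ n = 1} ∪ {(p : F)⁻¹})
    let I : ℕ → Ideal ↥R := fun n => Ideal.span {((q : ↥R)) ^ n}
    ∀ n : ℕ, I (n + 1) < I n ∧
      Infinite (↥(I n) ⧸ (Submodule.comap (I n).subtype (I (n + 1)))) := by
  intro R I n
  have hq0F : (q : F) ≠ 0 := Nat.cast_ne_zero.mpr hq.pos.ne'
  have hqR : ((q : ↥R) : F) = (q : F) := by push_cast; rfl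
  have hqR0 : (q : ↥R) ≠ 0 := by
    intro hcon
    apply hq0F
    rw [← hqR, hcon]
    rfl
  constructor
  · rw [show I (n + 1) = Ideal.span {(q : ↥R) ^ (n + 1)} from rfl,
      show I n = Ideal.span {(q : ↥R) ^ n} from rfl,
      Ideal.span_singleton_lt_span_singleton]
    refine ⟨pow_ne_zero n hqR0, q, ?_, (pow_succ _ n)⟩
    intro hu
    obtain ⟨r, hr⟩ := isUnit_iff_exists_inv.mp hu
    have hF : (q : F) * (r : F) = 1 := by
      have := congrArg (Subtype.val) hr
      push_cast at this
      exact this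
    exact aux_not_unit hp hq hne r.2 hF
  · -- infinitely many roots of unity give distinct classes
    have hexists : ∀ k : ℕ, ∃ ζ : F, IsPrimitiveRoot ζ (p ^ k) := by
      intro k
      have : NeZero ((p ^ k : ℕ) : F) :=
        ⟨Nat.cast_ne_zero.mpr (pow_ne_zero k hp.pos.ne')⟩
      exact HasEnoughRootsOfUnity.exists_primitiveRoot F (p ^ k)
    choose ζ hζ using hexists
    have hζR : ∀ k : ℕ, ζ k ∈ R :=
      fun k => Subring.subset_closure (Or.inl ⟨k, (hζ k).pow_eq_one⟩)
    have hζinj : Function.Injective ζ := by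
      intro k j hkj
      have : p ^ k = p ^ j := by
        rw [(hζ k).eq_orderOf, (hζ j).eq_orderOf, hkj]
      exact Nat.pow_right_injective hp.two_le this
    set e : ℕ → ↥(I n) := fun k =>
      ⟨(q : ↥R) ^ n * ⟨ζ k, hζR k⟩, by
        rw [show I n = Ideal.span {(q : ↥R) ^ n} from rfl, Ideal.mem_span_singleton]
        exact dvd_mul_right _ _⟩ with he
    set f : ℕ → ↥(I n) ⧸ (Submodule.comap (I n).subtype (I (n + 1))) := fun k =>
      Submodule.Quotient.mk (e k) with hf
    have hfinj : Function.Injective f := by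
      intro k j hkj
      rw [hf] at hkj
      have hmem := (Submodule.Quotient.eq _).mp hkj
      rw [Submodule.mem_comap] at hmem
      have hmem' : ((q : ↥R) ^ n * ⟨ζ k, hζR k⟩ - (q : ↥R) ^ n * ⟨ζ j, hζR j⟩ : ↥R)
          ∈ Ideal.span {(q : ↥R) ^ (n + 1)} := hmem
      obtain ⟨r, hr⟩ := Ideal.mem_span_singleton.mp hmem'
      by_contra hkj'
      have hzeta : ζ k ≠ ζ j := fun hh => hkj' (hζinj hh)
      have hFr : (q : F) ^ n * ζ k - (q : F) ^ n * ζ j = (q : F) ^ (n + 1) * (r : F) := by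
        have := congrArg (Subtype.val) hr
        push_cast at this
        exact this
      have hcancel : (q : F) * (r : F) = ζ k - ζ j := by
        have h3 : (q : F) ^ n * (ζ k - ζ j) = (q : F) ^ n * ((q : F) * (r : F)) := by
          rw [mul_sub, hFr, pow_succ]; ring
        exact (mul_left_cancel₀ (pow_ne_zero n hq0F) h3).symm
      exact aux_sep hp hq hne ⟨k, (hζ k).pow_eq_one⟩ ⟨j, (hζ j).pow_eq_one⟩
        hzeta r.2 hcancel
    exact Infinite.of_injective f hfinj
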